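/- Let A and B be symmetric positive definite 2×2 real matrices with a₂₂ = b₂₂. Define t₁ := √(det(B)/det(A)), t₂ := (b₁₂ − a₁₂t₁)/a₂₂, and T₁ := [[t₁, t₂],[0, 1]]. Then B = T₁ A T₁ᵀ. -/

import Mathlib

open Matrix

noncomputable section

/-- A state is a triple `(ρ, m, E)` with `ρ : ℝ`, `m : ℝ²`, `E` a 2×2 real matrix. -/
abbrev Mat2 := Matrix (Fin 2) (Fin 2) ℝ

/-- The pressure tensor `p(U) = 2E - (1/ρ) m mᵀ`. -/
def pTensor (ρ : ℝ) (m : Fin 2 → ℝ) (E : Mat2) : Mat2 :=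
  (2 : ℝ) • E - ρ⁻¹ • vecMulVec m m

/-- `φ(U; z, u*) = zᵀEz − (m·z)(u*·z) + (ρ/2)(u*·z)²`. -/
def phi (ρ : ℝ) (m : Fin 2 → ℝ) (E : Mat2) (z u : Fin 2 → ℝ) : ℝ :=
  z ⬝ᵥ (E *ᵥ z) - (m ⬝ᵥ z) * (u ⬝ᵥ z) + (ρ / 2) * (u ⬝ᵥ z) ^ 2

/-- The admissible set `𝒢`: states with positive density and positive definite pressure tensor. -/
def G : Set (ℝ × (Fin 2 → ℝ) × Mat2) :=
  {U | 0 < U.1 ∧ (pTensor U.1 U.2.1 U.2.2).PosDef}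

/-- The closed admissible set `𝒢̄`: states (so `E` symmetric) with `ρ ≥ 0` and
`φ(U; z, u*) ≥ 0` for all `z, u*`. -/
def Gbar : Set (ℝ × (Fin 2 → ℝ) × Mat2) :=
  {U | 0 ≤ U.1 ∧ U.2.2.IsSymm ∧ ∀ z u : Fin 2 → ℝ, 0 ≤ phi U.1 U.2.1 U.2.2 z u}

/-- Explicit triangular congruence: with `t₁ = √(det B / det A)` and
`t₂ = (b₁₂ − a₁₂ t₁)/a₂₂`, one has `B = T₁ A T₁ᵀ`. -/
theorem triangular_congruence_explicit (A B : Mat2)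
    (hA : A.PosDef) (hB : B.PosDef) (hab : A 1 1 = B 1 1)
    (t1 t2 : ℝ) (ht1 : t1 = Real.sqrt (B.det / A.det))
    (ht2 : t2 = (B 0 1 - A 0 1 * t1) / A 1 1) :
    B = !![t1, t2; 0, 1] * A * (!![t1, t2; 0, 1])ᵀ := by
  have hdA : 0 < A.det := hA.det_pos
  have hdB : 0 < B.det := hB.det_pos
  have hAs : A 1 0 = A 0 1 := by
    have := hA.isHermitian.apply 0 1
    simpa using this
  have hBs : B 1 0 = B 0 1 := by
    have := hB.isHermitian.apply 0 1
    simpa using this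
  have ha11 : 0 < A 1 1 := by
    have := hA.dotProduct_mulVec_pos (x := ![0, 1]) (by intro h; simpa using congrFun h 1)
    simpa [dotProduct, Matrix.mulVec, Fin.sum_univ_two] using this
  have ht1sq : t1 ^ 2 * A.det = B.det := by
    rw [ht1, Real.sq_sqrt (by positivity)]
    field_simp
  have hdetA : A.det = A 0 0 * A 1 1 - A 0 1 * A 0 1 := by
    rw [Matrix.det_fin_two, hAs]
  have hdetB : B.det = B 0 0 * B 1 1 - B 0 1 * B 0 1 := by
    rw [Matrix.det_fin_two, hBs]
  have ht2' : t2 * A 1 1 = B 0 1 - A 0 1 * t1 := by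
    rw [ht2]; field_simp
  ext i j
  fin_cases i <;> fin_cases j <;>
    simp [Matrix.mul_apply, Matrix.vecMul, dotProduct, Matrix.vecHead,
      Matrix.vecTail, Fin.sum_univ_two, hAs]
  · apply mul_left_cancel₀ (a := A 1 1 ^ 2) (by positivity)
    linear_combination A 1 1 * B 0 0 * hab - A 1 1 * hdetB - A 1 1 * ht1sq +
      t1 ^ 2 * A 1 1 * hdetA -
      (A 1 1 * B 0 1 + A 1 1 * A 0 1 * t1 + A 1 1 ^ 2 * t2) * ht2'
  all_goals nlinarith [ht1sq, hdetA, hdetB, ht2', ha11, hab]
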